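/- Let u : [0,∞) → V be a solution of the Navier–Stokes–Voigt equation satisfying sup_{t≥0} ‖u(t)‖_{V_α} ≤ M₁ (e.g., a solution on the global attractor). Set G = (I + α²A)^{1/2}, û = Gu, and for w ∈ H define L(û;t)w = −(ν/α²)w + (ν/α²)G^{-2}w − G^{-1}B(G^{-1}w, u(t)) − G^{-1}B(u(t), G^{-1}w). Then there exists a constant c > 0, independent of α, such that for every w ∈ H and t ≥ 0, ⟨L(û;t)w, w⟩ ≤ −h₀|w|² + h₁(t)|G^{-1}w|², where h₀ = ν/(2α²) and h₁(t) = (1/α²)(ν + c(M₁²/ν³)‖u(t)‖²). -/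

import Mathlib

open scoped RealInnerProductSpace
open Filter

noncomputable section

/-- Hausdorff semidistance between two sets with respect to a distance function `d`. -/
def hausSemidist {X : Type*} (d : X → X → ℝ) (B C : Set X) : ℝ :=
  ⨆ b ∈ B, ⨅ c ∈ C, d b c

/-- Smallest number of closed `ε`-balls (w.r.t. the distance `d`) needed to cover `K`. -/
def covN {X : Type*} (d : X → X → ℝ) (K : Set X) (ε : ℝ) : ℕ :=
  sInf {n : ℕ | ∃ F : Finset X, F.card = n ∧ K ⊆ ⋃ x ∈ F, {y | d x y ≤ ε}}

/-- Fractal (box-counting) dimension of `K` with respect to the distance `d`: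
`dim K = limsup_{ε → 0⁺} log N(ε,K) / log (1/ε)`. -/
def fdim {X : Type*} (d : X → X → ℝ) (K : Set X) : ℝ :=
  Filter.limsup (fun ε : ℝ => Real.log (covN d K ε) / Real.log (1 / ε))
    (nhdsWithin 0 (Set.Ioi 0))

/-- `K` has finite fractal dimension with respect to the distance `d`. -/
def HasFiniteFdim {X : Type*} (d : X → X → ℝ) (K : Set X) : Prop :=
  ∃ D : ℝ, ∀ᶠ ε in nhdsWithin (0 : ℝ) (Set.Ioi 0),
    Real.log (covN d K ε) / Real.log (1 / ε) ≤ D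

/-- The abstract functional setting for the Navier–Stokes–Voigt equations:
`H` is a real Hilbert space, `A` a strictly positive self-adjoint operator with
square root `sqrtA`, first eigenvalue `lam1`; `V = D(A^{1/2})` (as a subset of `H`),
`DA = D(A)`; `Bop` is the bilinear term with trilinear form `b(u,v,w) = ⟪Bop u v, w⟫`;
`nu` the viscosity, `g` the force; `Sα α t` is the solution semigroup of the
Navier–Stokes–Voigt problem `u' + α²Au' + νAu + B(u,u) = g`. -/
structure NSVSetting (H : Type*) [NormedAddCommGroup H] [InnerProductSpace ℝ H]
    [CompleteSpace H] where
  A : H →ₗ[ℝ] H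
  sqrtA : H →ₗ[ℝ] H
  V : Set H
  DA : Set H
  Bop : H →ₗ[ℝ] H →ₗ[ℝ] H
  lam1 : ℝ
  nu : ℝ
  g : H
  cb : ℝ
  Sα : ℝ → ℝ → H → H
  lam1_pos : 0 < lam1
  nu_pos : 0 < nu
  cb_pos : 0 < cb
  zero_mem_V : (0 : H) ∈ V
  DA_subset_V : DA ⊆ V
  sqrtA_sq : ∀ u ∈ DA, sqrtA (sqrtA u) = A u
  sqrtA_symm : ∀ u v : H, ⟪sqrtA u, v⟫ = ⟪u, sqrtA v⟫
  A_symm : ∀ u v : H, ⟪A u, v⟫ = ⟪u, A v⟫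
  A_pos : ∀ u ∈ DA, lam1 * ‖u‖ ^ 2 ≤ ⟪A u, u⟫
  poincare1 : ∀ u ∈ V, ‖u‖ ≤ (Real.sqrt lam1)⁻¹ * ‖sqrtA u‖
  poincare2 : ∀ u ∈ DA, ‖sqrtA u‖ ≤ (Real.sqrt lam1)⁻¹ * ‖A u‖
  b_skew : ∀ u ∈ V, ∀ v ∈ V, ⟪Bop u v, v⟫ = 0
  b_est1 : ∀ u ∈ V, ∀ v ∈ V, ∀ w ∈ V, |⟪Bop u v, w⟫| ≤
    cb * ‖sqrtA u‖ * ‖sqrtA v‖ * Real.sqrt ‖sqrtA w‖ * Real.sqrt ‖w‖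
  b_est2 : ∀ u ∈ V, ∀ v ∈ DA, ∀ w ∈ V, |⟪Bop u v, w⟫| ≤
    cb * ‖sqrtA u‖ * Real.sqrt ‖sqrtA v‖ * Real.sqrt ‖A v‖ * ‖w‖
  b_est3 : ∀ u ∈ DA, ∀ v ∈ V, ∀ w : H, |⟪Bop u v, w⟫| ≤
    cb * Real.sqrt ‖sqrtA u‖ * Real.sqrt ‖A u‖ * ‖sqrtA v‖ * ‖w‖
  Sα_zero : ∀ α ∈ Set.Ioc (0:ℝ) 1, ∀ u₀ ∈ V, Sα α 0 u₀ = u₀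
  Sα_mem : ∀ α ∈ Set.Ioc (0:ℝ) 1, ∀ u₀ ∈ V, ∀ t : ℝ, 0 ≤ t → Sα α t u₀ ∈ V
  Sα_semigroup : ∀ α ∈ Set.Ioc (0:ℝ) 1, ∀ u₀ ∈ V, ∀ s : ℝ, 0 ≤ s → ∀ t : ℝ, 0 ≤ t →
    Sα α (t + s) u₀ = Sα α t (Sα α s u₀)
  Sα_cont : ∀ α ∈ Set.Ioc (0:ℝ) 1, ∀ u₀ ∈ V,
    Continuous (fun t : ℝ => Sα α t u₀) ∧ Continuous (fun t : ℝ => sqrtA (Sα α t u₀))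
  Sα_sol : ∀ α ∈ Set.Ioc (0:ℝ) 1, ∀ u₀ ∈ V, ∃ u' : ℝ → H,
    (∀ t : ℝ, 0 ≤ t → HasDerivWithinAt (fun s => Sα α s u₀) (u' t) (Set.Ici 0) t) ∧
    (∀ t : ℝ, 0 ≤ t →
      u' t + α ^ 2 • A (u' t) + nu • A (Sα α t u₀) + Bop (Sα α t u₀) (Sα α t u₀) = g)
  Sα_unique : ∀ α ∈ Set.Ioc (0:ℝ) 1, ∀ u₀ ∈ V, ∀ u : ℝ → H,
    u 0 = u₀ → (∀ t : ℝ, 0 ≤ t → u t ∈ V) →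
    (∃ u' : ℝ → H, (∀ t : ℝ, 0 ≤ t → HasDerivWithinAt u (u' t) (Set.Ici 0) t) ∧
      (∀ t : ℝ, 0 ≤ t →
        u' t + α ^ 2 • A (u' t) + nu • A (u t) + Bop (u t) (u t) = g)) →
    ∀ t : ℝ, 0 ≤ t → u t = Sα α t u₀

namespace NSVSetting

variable {H : Type*} [NormedAddCommGroup H] [InnerProductSpace ℝ H] [CompleteSpace H]
variable (S : NSVSetting H)

/-- The `V`-norm `‖u‖ = |A^{1/2}u|`. -/
def nV (u : H) : ℝ := ‖S.sqrtA u‖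

/-- The `V_α`-norm, `‖u‖²_{V_α} = |u|² + α²‖u‖²`. -/
def nVα (α : ℝ) (u : H) : ℝ := Real.sqrt (‖u‖ ^ 2 + α ^ 2 * (S.nV u) ^ 2)

/-- The `V²_α`-norm, `‖u‖²_{V²_α} = ‖u‖² + α²|Au|²`. -/
def nV2α (α : ℝ) (u : H) : ℝ := Real.sqrt ((S.nV u) ^ 2 + α ^ 2 * ‖S.A u‖ ^ 2)

/-- The distance associated with the `V_α`-norm. -/
def dVα (α : ℝ) (u v : H) : ℝ := S.nVα α (u - v)

/-- `κ_ν = νλ₁/(1+λ₁α²)`. -/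
def kappa (α : ℝ) : ℝ := S.nu * S.lam1 / (1 + S.lam1 * α ^ 2)

/-- The absorbing set `B_α = {w ∈ V : |w|² + α²‖w‖² ≤ 2(1+λ₁α²)|g|²/(ν²λ₁²)}`. -/
def Babs (α : ℝ) : Set H :=
  {w | w ∈ S.V ∧ ‖w‖ ^ 2 + α ^ 2 * (S.nV w) ^ 2 ≤
    2 * (1 + S.lam1 * α ^ 2) * ‖S.g‖ ^ 2 / (S.nu ^ 2 * S.lam1 ^ 2)}

/-- `M₁ = [3(1+λ₁α²)|g|²/(ν²λ₁²)]^{1/2}`. -/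
def M1 (α : ℝ) : ℝ :=
  Real.sqrt (3 * (1 + S.lam1 * α ^ 2) * ‖S.g‖ ^ 2 / (S.nu ^ 2 * S.lam1 ^ 2))

/-- `r_α = (c/κ_ν)[M₁⁶/(α⁶ν³) + 2|g|²/ν]`. -/
def rα (c α : ℝ) : ℝ :=
  c / S.kappa α * ((S.M1 α) ^ 6 / (α ^ 6 * S.nu ^ 3) + 2 * ‖S.g‖ ^ 2 / S.nu)

/-- `D_α(r) = {u ∈ D(A) : ‖u‖² + α²|Au|² ≤ r} ∩ B_α`. -/
def Dset (α r : ℝ) : Set H :=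
  {u | u ∈ S.DA ∧ (S.nV u) ^ 2 + α ^ 2 * ‖S.A u‖ ^ 2 ≤ r} ∩ S.Babs α

/-- A set is sequentially compact for the `V_α`-metric. -/
def IsVαCompact (α : ℝ) (K : Set H) : Prop :=
  ∀ x : ℕ → H, (∀ n, x n ∈ K) → ∃ y ∈ K, ∃ φ : ℕ → ℕ, StrictMono φ ∧
    Tendsto (fun n => S.dVα α (x (φ n)) y) atTop (nhds 0)

/-- `Aset` is the global attractor of `S_α(t)` on `V_α`: a compact (in `V_α`)
fully invariant set attracting all `V_α`-bounded subsets of `V_α`. -/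
def IsGlobalAttractor (α : ℝ) (Aset : Set H) : Prop :=
  Aset ⊆ S.V ∧ Aset.Nonempty ∧ S.IsVαCompact α Aset ∧
  (∀ t : ℝ, 0 ≤ t → S.Sα α t '' Aset = Aset) ∧
  (∀ Bnd : Set H, Bnd ⊆ S.V → (∃ R, ∀ u ∈ Bnd, S.nVα α u ≤ R) →
    Tendsto (fun t => hausSemidist (S.dVα α) (S.Sα α t '' Bnd) Aset) atTop (nhds 0))

/-- The set `K_α`: the closure in `V_α` of `⋃_{t ≥ t_e} S_α(t)D_α(r_α)`
(where the constant `c` enters through `r_α`). -/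
def Kset (c α te : ℝ) : Set H :=
  {y | y ∈ S.V ∧ ∀ ε : ℝ, 0 < ε →
    ∃ x ∈ ⋃ t ∈ Set.Ici te, S.Sα α t '' S.Dset α (S.rα c α), S.dVα α y x < ε}

/-- The dual norm `‖f‖_* = sup {⟪f,v⟫ : v ∈ V, ‖v‖ ≤ 1}`. -/
def dualN (f : H) : ℝ := sSup {r : ℝ | ∃ v ∈ S.V, S.nV v ≤ 1 ∧ r = ⟪f, v⟫}

end NSVSetting


private lemma young_aux15 (P Z : ℝ) (hP : 0 ≤ P) (hZ : 0 ≤ Z) :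
    2 * P ^ 3 * Z ≤ P ^ 4 + 2 * Z ^ 4 := by
  nlinarith [mul_nonneg (sq_nonneg (3 * Z - 2 * P))
      (show (0:ℝ) ≤ 3 * Z ^ 2 + 4 * P * Z + 4 * P ^ 2 by positivity),
    pow_nonneg hZ 4, sq_nonneg Z, sq_nonneg P]

private lemma scalar_final15 (ν α cb M nw b a m C BB : ℝ) (hα2 : 0 < α ^ 2) (hν : 0 < ν)
    (hnw : nw ^ 2 = b ^ 2 + α ^ 2 * a ^ 2) (hM : α ^ 2 * m ^ 2 ≤ M ^ 2)
    (hF2 : -BB ≤ C) (hkey : 2 * ν ^ 3 * C ≤ ν ^ 4 * a ^ 2 + 2 * cb ^ 4 * m ^ 4 * b ^ 2) :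
    -(ν / α ^ 2) * nw ^ 2 + (ν / α ^ 2) * b ^ 2 - BB ≤
      -(ν / (2 * α ^ 2)) * nw ^ 2
        + (1 / α ^ 2) * (ν + cb ^ 4 * M ^ 2 / ν ^ 3 * m ^ 2) * b ^ 2 := by
  rw [← sub_nonneg]
  have hν3 : (0:ℝ) < ν ^ 3 := by positivity
  have hαne : α ^ 2 ≠ 0 := ne_of_gt hα2
  have hνne : ν ^ 3 ≠ 0 := ne_of_gt hν3
  have e : -(ν / (2 * α ^ 2)) * nw ^ 2
        + (1 / α ^ 2) * (ν + cb ^ 4 * M ^ 2 / ν ^ 3 * m ^ 2) * b ^ 2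
        - (-(ν / α ^ 2) * nw ^ 2 + (ν / α ^ 2) * b ^ 2 - BB)
      = (ν ^ 4 * nw ^ 2 + 2 * cb ^ 4 * M ^ 2 * m ^ 2 * b ^ 2 + 2 * α ^ 2 * ν ^ 3 * BB)
          / (2 * α ^ 2 * ν ^ 3) := by
    have hα0 : α ≠ 0 := by rintro rfl; norm_num at hα2
    field_simp
    ring
  rw [e]
  apply div_nonneg _ (by positivity)
  nlinarith [mul_le_mul_of_nonneg_left hF2
      (show (0:ℝ) ≤ 2 * α ^ 2 * ν ^ 3 by positivity),
    mul_le_mul_of_nonneg_left hkey (le_of_lt hα2),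
    mul_le_mul_of_nonneg_left hM (show (0:ℝ) ≤ 2 * cb ^ 4 * m ^ 2 * b ^ 2 by positivity),
    mul_le_mul_of_nonneg_left (show α ^ 2 * a ^ 2 ≤ nw ^ 2 by nlinarith [sq_nonneg b])
      (show (0:ℝ) ≤ ν ^ 4 by positivity)]

/-- the linearized operator `L(û;t)` along a trajectory on the
attractor satisfies `⟪L(û;t)w, w⟫ ≤ −h₀|w|² + h₁(t)|G⁻¹w|²` with
`h₀ = ν/(2α²)` and `h₁(t) = (1/α²)(ν + c(M₁²/ν³)‖u(t)‖²)`. -/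
theorem statement15 {H : Type*} [NormedAddCommGroup H] [InnerProductSpace ℝ H]
    [CompleteSpace H] (S : NSVSetting H) :
    ∃ c : ℝ, 0 < c ∧ ∀ α ∈ Set.Ioc (0:ℝ) 1, ∀ u : ℝ → H,
      (∀ t : ℝ, 0 ≤ t → u t ∈ S.V) →
      (∃ u' : ℝ → H, (∀ t : ℝ, 0 ≤ t → HasDerivWithinAt u (u' t) (Set.Ici 0) t) ∧
        (∀ t : ℝ, 0 ≤ t →
          u' t + α ^ 2 • S.A (u' t) + S.nu • S.A (u t) + S.Bop (u t) (u t) = S.g)) →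
      (∀ t : ℝ, 0 ≤ t → S.nVα α (u t) ≤ S.M1 α) →
      ∀ G Ginv : H →ₗ[ℝ] H,
        (∀ w, Ginv (G w) = w) → (∀ w, G (Ginv w) = w) →
        (∀ w, G (G w) = w + α ^ 2 • S.A w) →
        (∀ v w : H, ⟪G v, w⟫ = ⟪v, G w⟫) →
        (∀ w ∈ S.V, ‖G w‖ = S.nVα α w) →
        (∀ w : H, Ginv w ∈ S.V) →
        ∀ (w : H) (t : ℝ), 0 ≤ t →
          ⟪-((S.nu / α ^ 2) • w) + (S.nu / α ^ 2) • Ginv (Ginv w)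
              - Ginv (S.Bop (Ginv w) (u t)) - Ginv (S.Bop (u t) (Ginv w)), w⟫ ≤
            -(S.nu / (2 * α ^ 2)) * ‖w‖ ^ 2
              + (1 / α ^ 2) * (S.nu + c * (S.M1 α) ^ 2 / S.nu ^ 3 * (S.nV (u t)) ^ 2)
                * ‖Ginv w‖ ^ 2 := by
  refine ⟨S.cb ^ 4, pow_pos S.cb_pos 4, ?_⟩
  rintro α ⟨hα, -⟩ u huV - hbound G Ginv hGi hiG hGsq hGsymm hGnorm hGinvV w t ht
  have hα2 : (0:ℝ) < α ^ 2 := by positivity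
  have hν : 0 < S.nu := S.nu_pos
  have hut : u t ∈ S.V := huV t ht
  have hv : Ginv w ∈ S.V := hGinvV w
  -- symmetry of Ginv
  have hGis : ∀ a b : H, ⟪ Ginv a, b ⟫ = ⟪ a, Ginv b ⟫ := by
    intro a b
    calc ⟪ Ginv a, b ⟫ = ⟪ Ginv a, G (Ginv b) ⟫ := by rw [hiG]
      _ = ⟪ G (Ginv a), Ginv b ⟫ := (hGsymm _ _).symm
      _ = ⟪ a, Ginv b ⟫ := by rw [hiG]
  have h1 : ⟪ Ginv (Ginv w), w ⟫ = ‖Ginv w‖ ^ 2 := by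
    rw [hGis]; exact real_inner_self_eq_norm_sq _
  have h2 : ⟪ Ginv (S.Bop (Ginv w) (u t)), w ⟫ = ⟪ S.Bop (Ginv w) (u t), Ginv w ⟫ :=
    hGis _ _
  have h3 : ⟪ Ginv (S.Bop (u t) (Ginv w)), w ⟫ = 0 := by
    rw [hGis]; exact S.b_skew _ hut _ hv
  have hLHS : ⟪ -((S.nu / α ^ 2) • w) + (S.nu / α ^ 2) • Ginv (Ginv w)
      - Ginv (S.Bop (Ginv w) (u t)) - Ginv (S.Bop (u t) (Ginv w)), w ⟫
      = -(S.nu / α ^ 2) * ‖w‖ ^ 2 + (S.nu / α ^ 2) * ‖Ginv w‖ ^ 2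
        - ⟪ S.Bop (Ginv w) (u t), Ginv w ⟫ := by
    rw [inner_sub_left, inner_sub_left, inner_add_left, inner_neg_left,
      real_inner_smul_left, real_inner_smul_left, h1, h2, h3,
      real_inner_self_eq_norm_sq]
    ring
  set a := S.nV (Ginv w) with ha_def
  set m := S.nV (u t) with hm_def
  set b := ‖Ginv w‖ with hb_def
  have ha0 : 0 ≤ a := norm_nonneg _
  have hb0 : 0 ≤ b := norm_nonneg _
  have hm0 : 0 ≤ m := norm_nonneg _
  -- |w|² = b² + α²a²
  have hnw : ‖w‖ ^ 2 = b ^ 2 + α ^ 2 * a ^ 2 := by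
    have h := hGnorm (Ginv w) hv
    rw [hiG] at h
    rw [h, NSVSetting.nVα, Real.sq_sqrt (by positivity)]
  -- α²m² ≤ M²
  have hM : α ^ 2 * m ^ 2 ≤ (S.M1 α) ^ 2 := by
    have h0 : 0 ≤ S.nVα α (u t) := Real.sqrt_nonneg _
    have h2' : (S.nVα α (u t)) ^ 2 ≤ (S.M1 α) ^ 2 :=
      pow_le_pow_left₀ h0 (hbound t ht) 2
    have h3' : (S.nVα α (u t)) ^ 2 = ‖u t‖ ^ 2 + α ^ 2 * m ^ 2 := by
      rw [NSVSetting.nVα, Real.sq_sqrt (by positivity)]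
    nlinarith [sq_nonneg ‖u t‖]
  -- the b estimate
  have hb1 := S.b_est1 (Ginv w) hv (u t) hut (Ginv w) hv
  have hF2 : -⟪ S.Bop (Ginv w) (u t), Ginv w ⟫
      ≤ S.cb * a * m * Real.sqrt a * Real.sqrt b := by
    have := (abs_le.mp hb1).1
    have e : S.cb * ‖S.sqrtA (Ginv w)‖ * ‖S.sqrtA (u t)‖
        * Real.sqrt ‖S.sqrtA (Ginv w)‖ * Real.sqrt ‖Ginv w‖
        = S.cb * a * m * Real.sqrt a * Real.sqrt b := by rfl
    rw [e] at this
    linarith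
  -- the Young-type key inequality
  have h3a : Real.sqrt a ^ 3 = a * Real.sqrt a := by
    rw [pow_succ, Real.sq_sqrt ha0]
  have h4a : Real.sqrt a ^ 4 = a ^ 2 := by
    have e : Real.sqrt a ^ 4 = (Real.sqrt a ^ 2) ^ 2 := by ring
    rw [e, Real.sq_sqrt ha0]
  have h4b : Real.sqrt b ^ 4 = b ^ 2 := by
    have e : Real.sqrt b ^ 4 = (Real.sqrt b ^ 2) ^ 2 := by ring
    rw [e, Real.sq_sqrt hb0]
  have hkey : 2 * S.nu ^ 3 * (S.cb * a * m * Real.sqrt a * Real.sqrt b)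
      ≤ S.nu ^ 4 * a ^ 2 + 2 * S.cb ^ 4 * m ^ 4 * b ^ 2 := by
    have hY := young_aux15 (S.nu * Real.sqrt a) (S.cb * m * Real.sqrt b)
      (mul_nonneg S.nu_pos.le (Real.sqrt_nonneg _))
      (mul_nonneg (mul_nonneg S.cb_pos.le hm0) (Real.sqrt_nonneg _))
    have e1 : 2 * (S.nu * Real.sqrt a) ^ 3 * (S.cb * m * Real.sqrt b)
        = 2 * S.nu ^ 3 * (S.cb * a * m * Real.sqrt a * Real.sqrt b) := by
      rw [mul_pow, h3a]; ring
    have e2 : (S.nu * Real.sqrt a) ^ 4 + 2 * (S.cb * m * Real.sqrt b) ^ 4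
        = S.nu ^ 4 * a ^ 2 + 2 * S.cb ^ 4 * m ^ 4 * b ^ 2 := by
      rw [mul_pow, mul_pow, mul_pow, h4a, h4b]
      ring
    rw [e1, e2] at hY
    exact hY
  rw [hLHS]
  exact scalar_final15 S.nu α S.cb (S.M1 α) ‖w‖ b a m
    (S.cb * a * m * Real.sqrt a * Real.sqrt b)
    (⟪ S.Bop (Ginv w) (u t), Ginv w ⟫) hα2 hν hnw hM hF2 hkey
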